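/- If f is a concave nonnegative function on [0,∞), then for any positive reals x < y and any z ≥ 0, one has x·f(z/x) ≤ y·f(z/y). -/

import Mathlib

/-- If `f` is a concave nonnegative function on `[0,∞)`, then for positive `x < y`
and any `z ≥ 0`, `x·f(z/x) ≤ y·f(z/y)`. -/
theorem concave_scaling_ineq (f : ℝ → ℝ)
    (hconc : ConcaveOn ℝ (Set.Ici 0) f)
    (hnonneg : ∀ t ∈ Set.Ici (0 : ℝ), 0 ≤ f t)
    (x y z : ℝ) (hx : 0 < x) (hxy : x < y) (hz : 0 ≤ z) :
    x * f (z / x) ≤ y * f (z / y) := by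
  have hy : 0 < y := hx.trans hxy
  have ha : (0:ℝ) ≤ x / y := by positivity
  have hb : (0:ℝ) ≤ 1 - x / y := by
    have : x / y ≤ 1 := (div_le_one hy).mpr hxy.le
    linarith
  have hmem1 : z / x ∈ Set.Ici (0:ℝ) := Set.mem_Ici.mpr (by positivity)
  have hmem0 : (0:ℝ) ∈ Set.Ici (0:ℝ) := Set.mem_Ici.mpr le_rfl
  have key := hconc.2 hmem1 hmem0 ha hb (by ring)
  have heq : (x / y) • (z / x) + (1 - x / y) • (0:ℝ) = z / y := by
    field_simp
    simp only [smul_eq_mul, mul_zero, add_zero]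
    field_simp [hx.ne', hy.ne']
  rw [heq] at key
  have hf0 : 0 ≤ f 0 := hnonneg 0 hmem0
  have h1 : (x / y) * f (z / x) ≤ f (z / y) := by
    simp only [smul_eq_mul] at key
    nlinarith
  calc x * f (z / x) = y * ((x / y) * f (z / x)) := by field_simp
    _ ≤ y * f (z / y) := by nlinarith
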